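/- Let F be a linearly ordered field such that its Cartesian plane satisfies the following property (H*5-type): for all P₁, P₂ ∈ F² and every line (a, b, c) with (a, b) ≠ (0, 0), if (a·(P₂)₁ + b·(P₂)₂ + c)² ≤ ((P₁ − P₂) ⬝ (P₁ − P₂))·(a² + b²), then there exists P₃ ∈ F² with a·(P₃)₁ + b·(P₃)₂ + c = 0 and (P₃ − P₂) ⬝ (P₃ − P₂) = (P₁ − P₂) ⬝ (P₁ − P₂). Then every nonnegative element of F is a square. -/

import Mathlib

/-- If the plane over a linearly ordered field `F` satisfies the
(H*5)-type property, then every nonnegative element of `F` is a square. -/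
theorem stmt_13 {F : Type*} [Field F] [LinearOrder F] [IsStrictOrderedRing F]
    (hH5 : ∀ (P₁ P₂ : F × F) (a b c : F), (a, b) ≠ ((0 : F), (0 : F)) →
      (a * P₂.1 + b * P₂.2 + c) ^ 2 ≤
        ((P₁.1 - P₂.1) * (P₁.1 - P₂.1) + (P₁.2 - P₂.2) * (P₁.2 - P₂.2)) * (a ^ 2 + b ^ 2) →
      ∃ P₃ : F × F, a * P₃.1 + b * P₃.2 + c = 0 ∧
        (P₃.1 - P₂.1) * (P₃.1 - P₂.1) + (P₃.2 - P₂.2) * (P₃.2 - P₂.2) =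
          (P₁.1 - P₂.1) * (P₁.1 - P₂.1) + (P₁.2 - P₂.2) * (P₁.2 - P₂.2)) :
    ∀ x : F, 0 ≤ x → ∃ y : F, x = y ^ 2 := by
  intro x hx
  obtain ⟨P₃, h1, h2⟩ := hH5 ((0 : F), x) ((0 : F), (x - 1) / 2) 0 1 0
    (by simp) (by simp only []; nlinarith [sq_nonneg x])
  refine ⟨P₃.1, ?_⟩
  have hy : P₃.2 = 0 := by linarith [h1]
  rw [hy] at h2
  simp only [] at h2; nlinarith [h2, sq_nonneg P₃.1]
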